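/- For every integer m ≥ 0 there exists a constant C > 0 such that for all integers n ≥ 1, ‖v_{n,m}‖_{C^m(ℝ²)} ≤ C; that is, every partial derivative of v_{n,m} of order at most m is bounded on ℝ² uniformly in n. -/

import Mathlib

open MeasureTheory Real Complex Finset

noncomputable section

/-- The closed box `[-r, r]^d` in `ℝ^d`. -/
def box (d : ℕ) (r : ℝ) : Set (Fin d → ℝ) := {ξ | ∀ j, |ξ j| ≤ r}

/-- The Fourier transform `F v (ξ) = (2π)^{-d} ∫ e^{i ξ·x} v(x) dx`. -/
def FT (d : ℕ) (v : (Fin d → ℝ) → ℂ) (ξ : Fin d → ℝ) : ℂ :=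
  (((2 * Real.pi) ^ d : ℝ) : ℂ)⁻¹ *
    ∫ x : Fin d → ℝ, Complex.exp (Complex.I * ((∑ j, ξ j * x j : ℝ) : ℂ)) * v x

/-- Chebyshev polynomial of the first kind, evaluated at a real number. -/
def cheb (k : ℕ) (t : ℝ) : ℝ := (Polynomial.Chebyshev.T ℝ (k : ℤ)).eval t

/-- The Chebyshev coefficients `a_{k₁,…,k_d}[w]` of a function `w` on `[-r,r]^d`. -/
def acoef (d : ℕ) (r : ℝ) (w : (Fin d → ℝ) → ℂ) (k : Fin d → ℕ) : ℂ :=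
  ∫ ξ in box d r, w ξ *
    (((∏ j, (2 : ℝ) ^ (if 0 < k j then 1 else 0) * cheb (k j) (ξ j / r) /
        (Real.pi * Real.sqrt (r ^ 2 - ξ j ^ 2))) : ℝ) : ℂ)

open scoped Classical in
/-- The extrapolation `C_{R,n}[w]` based on truncated Chebyshev series. -/
def chebExt (d : ℕ) (r R : ℝ) (n : ℕ) (w : (Fin d → ℝ) → ℂ) (ξ : Fin d → ℝ) : ℂ :=
  if ξ ∈ box d r then w ξ
  else if ξ ∈ box d R then
    ∑ k ∈ (Fintype.piFinset fun _ : Fin d => Finset.range n).filter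
        (fun k => ∑ j, k j < n),
      acoef d r w k * (((∏ j, cheb (k j) (ξ j / r)) : ℝ) : ℂ)
  else 0

/-- The bump function `g` from the paper (formula (31)). -/
def gfun (t : ℝ) : ℝ :=
  if 1 < t ∧ t < 2 then Real.exp (1 / ((t - 1) * (t - 2))) else 0

/-- The function `v_{n,m}(t cos φ, t sin φ) = n^{-m} e^{i n φ} g(t)` from the paper. -/
def vnm (n m : ℕ) (x : Fin 2 → ℝ) : ℂ :=
  ((n : ℂ) ^ m)⁻¹ *
    ((((x 0 : ℂ) + (x 1 : ℂ) * Complex.I) /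
        ((‖(x 0 : ℂ) + (x 1 : ℂ) * Complex.I‖ : ℝ) : ℂ)) ^ n) *
    ((gfun ‖(x 0 : ℂ) + (x 1 : ℂ) * Complex.I‖ : ℝ) : ℂ)

open Filter

/-- Smooth version of the bump. -/
def gg (t : ℝ) : ℝ := expNegInvGlue (t - 1) * expNegInvGlue (2 - t)

lemma gg_eq_zero {t : ℝ} (h : t ≤ 1 ∨ 2 ≤ t) : gg t = 0 := by
  rcases h with h | h
  · rw [gg, expNegInvGlue.zero_of_nonpos (by linarith), zero_mul]
  · rw [gg, expNegInvGlue.zero_of_nonpos (x := 2 - t) (by linarith), mul_zero]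

lemma gg_contDiff (m : ℕ) : ContDiff ℝ m gg := by
  have h : ContDiff ℝ ((m : ℕ∞) : WithTop ℕ∞) gg :=
    ((expNegInvGlue.contDiff).comp (contDiff_id.sub contDiff_const)).mul
      ((expNegInvGlue.contDiff).comp (contDiff_const.sub contDiff_id))
  exact_mod_cast h

lemma exists_deriv_bound {E F : Type*} [NormedAddCommGroup E] [NormedSpace ℝ E]
    [NormedAddCommGroup F] [NormedSpace ℝ F] {f : E → F}
    {U K : Set E} {m : ℕ} (hf : ContDiffOn ℝ m f U) (hU : UniqueDiffOn ℝ U)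
    (hK : IsCompact K) (hKU : K ⊆ U) :
    ∃ D : ℝ, 1 ≤ D ∧ ∀ k ≤ m, ∀ x ∈ K, ‖iteratedFDerivWithin ℝ k f U x‖ ≤ D := by
  have h : ∀ k : ℕ, ∃ C : ℝ, k ≤ m → ∀ x ∈ K, ‖iteratedFDerivWithin ℝ k f U x‖ ≤ C := by
    intro k
    rcases le_or_gt k m with hk | hk
    · obtain ⟨C, hC⟩ := hK.exists_bound_of_continuousOn
        ((hf.continuousOn_iteratedFDerivWithin (by exact_mod_cast hk) hU).mono hKU)
      exact ⟨C, fun _ => hC⟩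
    · exact ⟨0, fun h => absurd h (by omega)⟩
  choose C hC using h
  refine ⟨max 1 (∑ k ∈ Finset.range (m + 1), |C k|), le_max_left _ _, fun k hk x hx => ?_⟩
  calc ‖iteratedFDerivWithin ℝ k f U x‖ ≤ C k := hC k hk x hx
    _ ≤ |C k| := le_abs_self _
    _ ≤ ∑ j ∈ Finset.range (m + 1), |C j| :=
        Finset.single_le_sum (f := fun j => |C j|) (fun j _ => abs_nonneg _)
          (Finset.mem_range.mpr (Nat.lt_succ_of_le hk))
    _ ≤ _ := le_max_right _ _

lemma pow_deriv_bound {E : Type*} [NormedAddCommGroup E] [NormedSpace ℝ E]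
    {w : E → ℂ} {U : Set E} (hU : UniqueDiffOn ℝ U) {m n j : ℕ}
    (hw : ContDiffOn ℝ m w U) (hj : j ≤ m) {x : E} (hx : x ∈ U) (hwx : ‖w x‖ = 1)
    {D : ℝ} (hD1 : 1 ≤ D) (hD : ∀ k ≤ m, ‖iteratedFDerivWithin ℝ k w U x‖ ≤ D) :
    ‖iteratedFDerivWithin ℝ j (fun y => w y ^ n) U x‖ ≤ (n : ℝ) ^ j * D ^ j := by
  classical
  have hprod : (fun y => w y ^ n) = (fun y => ∏ _i ∈ (Finset.univ : Finset (Fin n)), w y) := by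
    funext y
    simp
  rw [hprod]
  have hb := norm_iteratedFDerivWithin_prod_le (𝕜 := ℝ) (s := U)
      (f := fun _ : Fin n => w) (u := (Finset.univ : Finset (Fin n)))
      (fun _ _ => hw) hU hx (n := j) (by exact_mod_cast hj)
  refine le_trans hb ?_
  have hsum : ((n : ℝ)) ^ j =
      ∑ p ∈ (Finset.univ : Finset (Fin n)).sym j, ((p : Multiset (Fin n)).countPerms : ℝ) := by
    have h := Finset.sum_pow (s := (Finset.univ : Finset (Fin n))) (fun _ : Fin n => (1 : ℝ)) j
    simpa using h
  rw [hsum, Finset.sum_mul]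
  refine Finset.sum_le_sum fun p _ => ?_
  refine mul_le_mul_of_nonneg_left ?_ (Nat.cast_nonneg _)
  have hcard : Multiset.card (p : Multiset (Fin n)) = j := p.2
  calc ∏ i, ‖iteratedFDerivWithin ℝ ((p : Multiset (Fin n)).count i) w U x‖
      ≤ ∏ i, D ^ ((p : Multiset (Fin n)).count i) := by
        refine Finset.prod_le_prod (fun i _ => norm_nonneg _) fun i _ => ?_
        rcases Nat.eq_zero_or_pos ((p : Multiset (Fin n)).count i) with h0 | h0
        · rw [h0, pow_zero, norm_iteratedFDerivWithin_zero, hwx]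
        · have hcj : (p : Multiset (Fin n)).count i ≤ j :=
            (Multiset.count_le_card i _).trans (le_of_eq hcard)
          exact le_trans (hD _ (hcj.trans hj)) (le_self_pow₀ hD1 (by omega))
    _ = D ^ (∑ i, (p : Multiset (Fin n)).count i) := Finset.prod_pow_eq_pow_sum ..
    _ = D ^ j := by
        congr 1
        calc ∑ i : Fin n, (p : Multiset (Fin n)).count i
            = ∑ i ∈ (p : Multiset (Fin n)).toFinset, (p : Multiset (Fin n)).count i :=
              (Finset.sum_subset (Finset.subset_univ _) fun i _ hi =>
                Multiset.count_eq_zero.mpr (by simpa using hi)).symm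
          _ = Multiset.card (p : Multiset (Fin n)) := Multiset.toFinset_sum_count_eq _
          _ = j := hcard

lemma gfun_eq_gg : gfun = gg := by
  funext t
  rcases le_or_gt t 1 with h1 | h1
  · rw [gfun, if_neg (by rintro ⟨h, -⟩; linarith), gg_eq_zero (Or.inl h1)]
  rcases le_or_gt 2 t with h2 | h2
  · rw [gfun, if_neg (by rintro ⟨-, h⟩; linarith), gg_eq_zero (Or.inr h2)]
  · rw [gfun, if_pos ⟨h1, h2⟩, gg]
    rw [expNegInvGlue, if_neg (by linarith), expNegInvGlue, if_neg (by linarith),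
      ← Real.exp_add]
    congr 1
    have e1 : t - 1 ≠ 0 := by linarith
    have e2 : 2 - t ≠ 0 := by linarith
    have e3 : (t - 1) * (t - 2) ≠ 0 := mul_ne_zero e1 (by linarith)
    have e4 : (t - 1) * (2 - t) ≠ 0 := mul_ne_zero e1 e2
    have e5 : t - 2 ≠ 0 := by linarith
    field_simp
    ring

/-- Formula (33) of the paper: `‖v_{n,m}‖_{C^m(ℝ²)} = O(1)` as `n → ∞`. -/
theorem stmt19 (m : ℕ) :
    ∃ C > 0, ∀ n : ℕ, 1 ≤ n →
      ContDiff ℝ m (vnm n m) ∧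
      ∀ i ≤ m, ∀ x, ‖iteratedFDeriv ℝ i (vnm n m) x‖ ≤ C := by
  classical
  set c : (Fin 2 → ℝ) → ℂ := fun x => (x 0 : ℂ) + (x 1 : ℂ) * Complex.I with hc_def
  have hc : ContDiff ℝ m c := by
    have h0 : ContDiff ℝ m fun x : Fin 2 → ℝ => ((x 0 : ℝ) : ℂ) :=
      Complex.ofRealCLM.contDiff.comp
        (ContinuousLinearMap.proj (R := ℝ) (φ := fun _ : Fin 2 => ℝ) 0).contDiff
    have h1 : ContDiff ℝ m fun x : Fin 2 → ℝ => ((x 1 : ℝ) : ℂ) :=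
      Complex.ofRealCLM.contDiff.comp
        (ContinuousLinearMap.proj (R := ℝ) (φ := fun _ : Fin 2 => ℝ) 1).contDiff
    exact h0.add (h1.mul contDiff_const)
  set U : Set (Fin 2 → ℝ) := {x | 1/2 < ‖c x‖} with hU_def
  have hU_open : IsOpen U := by
    have h : U = (fun x => ‖c x‖) ⁻¹' Set.Ioi (1/2) := rfl
    rw [h]
    exact isOpen_Ioi.preimage hc.continuous.norm
  have hUniq : UniqueDiffOn ℝ U := hU_open.uniqueDiffOn
  have hpos : ∀ x ∈ U, (0 : ℝ) < ‖c x‖ := fun x hx => lt_trans (by norm_num) hx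
  have hnormU : ContDiffOn ℝ m (fun x => ‖c x‖) U := by
    intro x hx
    have hne : c x ≠ 0 := by
      intro h
      have := hpos x hx
      rw [h, norm_zero] at this
      exact lt_irrefl _ this
    exact ((contDiffAt_norm ℝ hne).comp x hc.contDiffAt).contDiffWithinAt
  set w : (Fin 2 → ℝ) → ℂ := fun x => c x / ((‖c x‖ : ℝ) : ℂ) with hw_def
  have hw : ContDiffOn ℝ m w U := by
    have h : ContDiffOn ℝ m (fun x => c x * (((‖c x‖)⁻¹ : ℝ) : ℂ)) U :=
      hc.contDiffOn.mul (Complex.ofRealCLM.contDiff.comp_contDiffOn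
        (hnormU.inv (fun x hx => ne_of_gt (hpos x hx))))
    refine h.congr fun x hx => ?_
    rw [hw_def]
    simp only
    rw [div_eq_mul_inv, Complex.ofReal_inv]
  have hw1 : ∀ x ∈ U, ‖w x‖ = 1 := by
    intro x hx
    rw [hw_def]
    simp only
    rw [norm_div, Complex.norm_real, Real.norm_eq_abs, abs_of_pos (hpos x hx),
      div_self (ne_of_gt (hpos x hx))]
  set G : (Fin 2 → ℝ) → ℂ := fun x => ((gg ‖c x‖ : ℝ) : ℂ) with hG_def
  have hG : ContDiffOn ℝ m G U :=
    Complex.ofRealCLM.contDiff.comp_contDiffOn ((gg_contDiff m).comp_contDiffOn hnormU)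
  set K : Set (Fin 2 → ℝ) := {x | 1 ≤ ‖c x‖ ∧ ‖c x‖ ≤ 2} with hK_def
  have hKU : K ⊆ U := fun x hx => by
    have h1 : (1 : ℝ) ≤ ‖c x‖ := hx.1
    show 1/2 < ‖c x‖
    linarith
  have hKclosed : IsClosed K := by
    have h : K = (fun x => ‖c x‖) ⁻¹' Set.Icc 1 2 := by
      ext x
      simp [hK_def, Set.mem_Icc]
    rw [h]
    exact isClosed_Icc.preimage hc.continuous.norm
  have habs : ∀ (x : Fin 2 → ℝ) (i : Fin 2), |x i| ≤ ‖c x‖ := by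
    intro x i
    have hre := Complex.abs_re_le_norm (c x)
    have him := Complex.abs_im_le_norm (c x)
    have hre' : (c x).re = x 0 := by simp [hc_def]
    have him' : (c x).im = x 1 := by simp [hc_def]
    fin_cases i
    · show |x 0| ≤ ‖c x‖
      rw [← hre']; exact hre
    · show |x 1| ≤ ‖c x‖
      rw [← him']; exact him
  have hK : IsCompact K := by
    refine (isCompact_closedBall (0 : Fin 2 → ℝ) 2).of_isClosed_subset hKclosed ?_
    intro x hx
    rw [Metric.mem_closedBall, dist_zero_right]
    rw [pi_norm_le_iff_of_nonneg (by norm_num)]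
    intro i
    rw [Real.norm_eq_abs]
    exact le_trans (habs x i) hx.2
  obtain ⟨D, hD1, hD⟩ := exists_deriv_bound hw hUniq hK hKU
  obtain ⟨B, hB1, hB⟩ := exists_deriv_bound hG hUniq hK hKU
  have hD0 : (0 : ℝ) ≤ D := le_trans zero_le_one hD1
  have hB0 : (0 : ℝ) ≤ B := le_trans zero_le_one hB1
  refine ⟨2 ^ m * D ^ m * B, by positivity, fun n hn => ?_⟩
  have hveq : vnm n m = fun x => ((n : ℂ) ^ m)⁻¹ • (w x ^ n * G x) := by
    funext x
    simp only [vnm, hw_def, hG_def, hc_def, gfun_eq_gg,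
      smul_eq_mul, mul_assoc]
  have hzero : ∀ x : Fin 2 → ℝ, ‖c x‖ < 1 ∨ 2 < ‖c x‖ →
      (fun y => ((n : ℂ) ^ m)⁻¹ • (w y ^ n * G y)) =ᶠ[nhds x] fun _ => (0 : ℂ) := by
    intro x hx
    have hopen : IsOpen {y : Fin 2 → ℝ | ‖c y‖ < 1 ∨ 2 < ‖c y‖} := by
      have h : {y : Fin 2 → ℝ | ‖c y‖ < 1 ∨ 2 < ‖c y‖}
          = (fun y => ‖c y‖) ⁻¹' (Set.Iio 1 ∪ Set.Ioi 2) := rfl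
      rw [h]
      exact (isOpen_Iio.union isOpen_Ioi).preimage hc.continuous.norm
    filter_upwards [hopen.mem_nhds hx] with y hy
    have hgg : gg ‖c y‖ = 0 := by
      rcases hy with h | h
      · exact gg_eq_zero (Or.inl h.le)
      · exact gg_eq_zero (Or.inr h.le)
    have hGy : G y = 0 := by
      rw [hG_def]
      simp only
      rw [hgg, Complex.ofReal_zero]
    simp [hGy]
  have hWG : ContDiffOn ℝ m (fun y => w y ^ n * G y) U := (hw.pow n).mul hG
  have hcd : ContDiffOn ℝ m (fun y => ((n : ℂ) ^ m)⁻¹ • (w y ^ n * G y)) U :=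
    hWG.const_smul _
  constructor
  · rw [hveq, contDiff_iff_contDiffAt]
    intro x
    rcases lt_or_ge ‖c x‖ 1 with h1 | h1
    · exact contDiffAt_const.congr_of_eventuallyEq (hzero x (Or.inl h1))
    · have hxU : x ∈ U := by
        show 1/2 < ‖c x‖
        linarith
      exact hcd.contDiffAt (hU_open.mem_nhds hxU)
  · intro i hi x
    have hCnn : (0 : ℝ) ≤ 2 ^ m * D ^ m * B := by positivity
    have hzcase : ∀ _ : ‖c x‖ < 1 ∨ 2 < ‖c x‖,
        ‖iteratedFDeriv ℝ i (vnm n m) x‖ ≤ 2 ^ m * D ^ m * B := by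
      intro hx
      rw [hveq]
      have hev := hzero x hx
      have heq : iteratedFDeriv ℝ i (fun y => ((n : ℂ) ^ m)⁻¹ • (w y ^ n * G y)) x = 0 := by
        have h2 : (fun y => ((n : ℂ) ^ m)⁻¹ • (w y ^ n * G y))
            =ᶠ[nhdsWithin x Set.univ] (fun _ => (0 : ℂ)) := by
          simpa [nhdsWithin_univ] using hev
        have h3 := Filter.EventuallyEq.iteratedFDerivWithin_eq (𝕜 := ℝ) h2 (hev.eq_of_nhds) i
        rw [← iteratedFDerivWithin_univ, h3, iteratedFDerivWithin_univ, iteratedFDeriv_zero_fun]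
        rfl
      rw [heq, norm_zero]
      exact hCnn
    rcases lt_or_ge ‖c x‖ 1 with h1 | h1
    · exact hzcase (Or.inl h1)
    rcases le_or_gt ‖c x‖ 2 with h2 | h2
    swap
    · exact hzcase (Or.inr h2)
    have hxK : x ∈ K := ⟨h1, h2⟩
    have hxU : x ∈ U := hKU hxK
    have him : (i : WithTop ℕ∞) ≤ (m : WithTop ℕ∞) := by exact_mod_cast hi
    have hn1 : (1 : ℝ) ≤ (n : ℝ) := by exact_mod_cast hn
    have hnm0 : ((n : ℝ) ^ m) ≠ 0 := by positivity
    rw [hveq]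
    rw [show (fun x => ((n : ℂ) ^ m)⁻¹ • (w x ^ n * G x))
        = (((n : ℂ) ^ m)⁻¹ • fun x => w x ^ n * G x) from rfl]
    rw [← iteratedFDerivWithin_of_isOpen (𝕜 := ℝ) i hU_open hxU]
    rw [iteratedFDerivWithin_const_smul_apply ((hWG.of_le him) x hxU) hUniq hxU]
    rw [norm_smul ((n : ℂ) ^ m)⁻¹ (iteratedFDerivWithin ℝ i (fun y => w y ^ n * G y) U x)]
    have hna : ‖((n : ℂ) ^ m)⁻¹‖ = ((n : ℝ) ^ m)⁻¹ := by
      rw [norm_inv, norm_pow, Complex.norm_natCast]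
    rw [hna]
    have hmul := norm_iteratedFDerivWithin_mul_le (𝕜 := ℝ) (f := fun y => w y ^ n) (g := G)
      (hw.pow n) hG hUniq hxU him
    have hterm : ∀ j ∈ Finset.range (i + 1),
        (i.choose j : ℝ) * ‖iteratedFDerivWithin ℝ j (fun y => w y ^ n) U x‖ *
          ‖iteratedFDerivWithin ℝ (i - j) G U x‖ ≤
        (i.choose j : ℝ) * ((n : ℝ) ^ m * D ^ m * B) := by
      intro j hj
      have hji : j ≤ i := by
        have := Finset.mem_range.mp hj
        omega
      have hjm : j ≤ m := le_trans hji hi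
      have h1' := pow_deriv_bound (n := n) hUniq hw hjm hxU (hw1 x hxU) hD1
        (fun k hk => hD k hk x hxK)
      have h1'' : ‖iteratedFDerivWithin ℝ j (fun y => w y ^ n) U x‖ ≤ (n : ℝ) ^ m * D ^ m :=
        le_trans h1' (mul_le_mul (pow_le_pow_right₀ hn1 hjm) (pow_le_pow_right₀ hD1 hjm)
          (by positivity) (by positivity))
      have h2' : ‖iteratedFDerivWithin ℝ (i - j) G U x‖ ≤ B :=
        hB (i - j) (by omega) x hxK
      calc (i.choose j : ℝ) * ‖iteratedFDerivWithin ℝ j (fun y => w y ^ n) U x‖ *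
            ‖iteratedFDerivWithin ℝ (i - j) G U x‖
          ≤ (i.choose j : ℝ) * ((n : ℝ) ^ m * D ^ m) * B := by
            refine mul_le_mul (mul_le_mul_of_nonneg_left h1'' (Nat.cast_nonneg _)) h2'
              (norm_nonneg _) (by positivity)
        _ = (i.choose j : ℝ) * ((n : ℝ) ^ m * D ^ m * B) := by ring
    have hbound : ‖iteratedFDerivWithin ℝ i (fun y => w y ^ n * G y) U x‖ ≤
        2 ^ i * ((n : ℝ) ^ m * D ^ m * B) := by
      refine le_trans hmul ?_
      refine le_trans (Finset.sum_le_sum hterm) ?_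
      rw [← Finset.sum_mul]
      have hch : (∑ j ∈ Finset.range (i + 1), (i.choose j : ℝ)) = 2 ^ i := by
        rw [← Nat.cast_sum]
        rw [Nat.sum_range_choose]
        push_cast
        ring
      rw [hch]
    calc ((n : ℝ) ^ m)⁻¹ * ‖iteratedFDerivWithin ℝ i (fun y => w y ^ n * G y) U x‖
        ≤ ((n : ℝ) ^ m)⁻¹ * (2 ^ i * ((n : ℝ) ^ m * D ^ m * B)) := by
          refine mul_le_mul_of_nonneg_left hbound (by positivity)
      _ = 2 ^ i * (D ^ m * B) := by
          field_simp
      _ ≤ 2 ^ m * (D ^ m * B) := by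
          refine mul_le_mul_of_nonneg_right ?_ (by positivity)
          exact pow_le_pow_right₀ (by norm_num) hi
      _ = 2 ^ m * D ^ m * B := by ring
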